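/- Let L be a Lie algebra over ℝ with basis X_1, ..., X_9 (b : Basis (Fin 9) ℝ L, with 1-based labels), and let α : ℕ → ℕ → ℝ be such that for all 1 ≤ i < j ≤ 9 one has ⁅X_i, X_j⁆ = α i j • X_{i+j} when i + j ≤ 9 and ⁅X_i, X_j⁆ = 0 when i + j > 9 (so L admits a derivation of eigenvalue type 1 < 2 < ... < 9). Then the Jacobi identity forces the following equations on the structure constants: α 1 3 * α 2 4 = α 2 3 * α 1 5; α 1 2 * α 3 4 + α 1 4 * α 2 5 = α 2 4 * α 1 6; α 1 2 * α 3 5 + α 1 5 * α 2 6 = α 2 5 * α 1 7; α 1 4 * α 3 5 = α 3 4 * α 1 7; α 1 2 * α 3 6 + α 1 6 * α 2 7 = α 2 6 * α 1 8; α 1 3 * α 4 5 + α 1 5 * α 3 6 = α 3 5 * α 1 8; and α 2 4 * α 3 6 = α 2 3 * α 4 5 + α 3 4 * α 2 7. -/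

import Mathlib

theorem nine_dim_ordered_jacobi_equations (L : Type*)
    [LieRing L] [LieAlgebra ℝ L] (b : Module.Basis (Fin 9) ℝ L)
    (X : ℕ → L) (hX : ∀ i : Fin 9, X ((i : ℕ) + 1) = b i)
    (α : ℕ → ℕ → ℝ)
    (hbr : ∀ i j : ℕ, 1 ≤ i → i < j → j ≤ 9 → i + j ≤ 9 →
      ⁅X i, X j⁆ = α i j • X (i + j))
    (hzero : ∀ i j : ℕ, 1 ≤ i → i < j → j ≤ 9 → 9 < i + j → ⁅X i, X j⁆ = 0) :
    α 1 3 * α 2 4 = α 2 3 * α 1 5 ∧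
    α 1 2 * α 3 4 + α 1 4 * α 2 5 = α 2 4 * α 1 6 ∧
    α 1 2 * α 3 5 + α 1 5 * α 2 6 = α 2 5 * α 1 7 ∧
    α 1 4 * α 3 5 = α 3 4 * α 1 7 ∧
    α 1 2 * α 3 6 + α 1 6 * α 2 7 = α 2 6 * α 1 8 ∧
    α 1 3 * α 4 5 + α 1 5 * α 3 6 = α 3 5 * α 1 8 ∧
    α 2 4 * α 3 6 = α 2 3 * α 4 5 + α 3 4 * α 2 7 := by
  have key : ∀ (n : Fin 9) (s t : ℝ), s • b n = t • b n → s = t := by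
    intro n s t h
    have h' : (s - t) • b n = 0 := by rw [sub_smul, h, sub_self]
    have := (smul_eq_zero.mp h').resolve_right (b.ne_zero n)
    linarith [this]
  have h6 : X 6 = b 5 := by have := hX 5; norm_num at this; exact this
  have h7 : X 7 = b 6 := by have := hX 6; norm_num at this; exact this
  have h8 : X 8 = b 7 := by have := hX 7; norm_num at this; exact this
  have h9 : X 9 = b 8 := by have := hX 8; norm_num at this; exact this
  refine ⟨?_, ?_, ?_, ?_, ?_, ?_, ?_⟩
  · -- triple (1,2,3)
    have h := lie_lie (X 1) (X 2) (X 3)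
    rw [hbr 1 2 (by norm_num) (by norm_num) (by norm_num) (by norm_num),
        hbr 2 3 (by norm_num) (by norm_num) (by norm_num) (by norm_num),
        hbr 1 3 (by norm_num) (by norm_num) (by norm_num) (by norm_num)] at h
    norm_num at h
    rw [
        hbr 1 5 (by norm_num) (by norm_num) (by norm_num) (by norm_num),
        hbr 2 4 (by norm_num) (by norm_num) (by norm_num) (by norm_num),
        smul_smul, smul_smul] at h
    norm_num [h6] at h
    rw [← sub_smul] at h
    have := (smul_eq_zero.mp h.symm).resolve_right (b.ne_zero 5)
    linarith [this]
  · -- triple (1,2,4)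
    have h := lie_lie (X 1) (X 2) (X 4)
    rw [hbr 1 2 (by norm_num) (by norm_num) (by norm_num) (by norm_num),
        hbr 2 4 (by norm_num) (by norm_num) (by norm_num) (by norm_num),
        hbr 1 4 (by norm_num) (by norm_num) (by norm_num) (by norm_num)] at h
    norm_num at h
    rw [
        hbr 3 4 (by norm_num) (by norm_num) (by norm_num) (by norm_num),
        hbr 1 6 (by norm_num) (by norm_num) (by norm_num) (by norm_num),
        hbr 2 5 (by norm_num) (by norm_num) (by norm_num) (by norm_num),
        smul_smul, smul_smul, smul_smul] at h
    norm_num [h7] at h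
    rw [← sub_smul] at h
    have := key 6 _ _ h
    linarith [this]
  · -- triple (1,2,5)
    have h := lie_lie (X 1) (X 2) (X 5)
    rw [hbr 1 2 (by norm_num) (by norm_num) (by norm_num) (by norm_num),
        hbr 2 5 (by norm_num) (by norm_num) (by norm_num) (by norm_num),
        hbr 1 5 (by norm_num) (by norm_num) (by norm_num) (by norm_num)] at h
    norm_num at h
    rw [
        hbr 3 5 (by norm_num) (by norm_num) (by norm_num) (by norm_num),
        hbr 1 7 (by norm_num) (by norm_num) (by norm_num) (by norm_num),
        hbr 2 6 (by norm_num) (by norm_num) (by norm_num) (by norm_num),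
        smul_smul, smul_smul, smul_smul] at h
    norm_num [h8] at h
    rw [← sub_smul] at h
    have := key 7 _ _ h
    linarith [this]
  · -- triple (1,3,4)
    have h := lie_lie (X 1) (X 3) (X 4)
    rw [hbr 1 3 (by norm_num) (by norm_num) (by norm_num) (by norm_num),
        hbr 3 4 (by norm_num) (by norm_num) (by norm_num) (by norm_num),
        hbr 1 4 (by norm_num) (by norm_num) (by norm_num) (by norm_num)] at h
    norm_num at h
    rw [
        hbr 1 7 (by norm_num) (by norm_num) (by norm_num) (by norm_num),
        hbr 3 5 (by norm_num) (by norm_num) (by norm_num) (by norm_num),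
        smul_smul, smul_smul] at h
    norm_num [h8] at h
    rw [← sub_smul] at h
    have := (smul_eq_zero.mp h.symm).resolve_right (b.ne_zero 7)
    linarith [this]
  · -- triple (1,2,6)
    have h := lie_lie (X 1) (X 2) (X 6)
    rw [hbr 1 2 (by norm_num) (by norm_num) (by norm_num) (by norm_num),
        hbr 2 6 (by norm_num) (by norm_num) (by norm_num) (by norm_num),
        hbr 1 6 (by norm_num) (by norm_num) (by norm_num) (by norm_num)] at h
    norm_num at h
    rw [
        hbr 3 6 (by norm_num) (by norm_num) (by norm_num) (by norm_num),
        hbr 1 8 (by norm_num) (by norm_num) (by norm_num) (by norm_num),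
        hbr 2 7 (by norm_num) (by norm_num) (by norm_num) (by norm_num),
        smul_smul, smul_smul, smul_smul] at h
    norm_num [h9] at h
    rw [← sub_smul] at h
    have := key 8 _ _ h
    linarith [this]
  · -- triple (1,3,5)
    have h := lie_lie (X 1) (X 3) (X 5)
    rw [hbr 1 3 (by norm_num) (by norm_num) (by norm_num) (by norm_num),
        hbr 3 5 (by norm_num) (by norm_num) (by norm_num) (by norm_num),
        hbr 1 5 (by norm_num) (by norm_num) (by norm_num) (by norm_num)] at h
    norm_num at h
    rw [
        hbr 4 5 (by norm_num) (by norm_num) (by norm_num) (by norm_num),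
        hbr 1 8 (by norm_num) (by norm_num) (by norm_num) (by norm_num),
        hbr 3 6 (by norm_num) (by norm_num) (by norm_num) (by norm_num),
        smul_smul, smul_smul, smul_smul] at h
    norm_num [h9] at h
    rw [← sub_smul] at h
    have := key 8 _ _ h
    linarith [this]
  · -- triple (2,3,4)
    have h := lie_lie (X 2) (X 3) (X 4)
    rw [hbr 2 3 (by norm_num) (by norm_num) (by norm_num) (by norm_num),
        hbr 3 4 (by norm_num) (by norm_num) (by norm_num) (by norm_num),
        hbr 2 4 (by norm_num) (by norm_num) (by norm_num) (by norm_num)] at h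
    norm_num at h
    rw [← lie_skew (X 5) (X 4),
        hbr 4 5 (by norm_num) (by norm_num) (by norm_num) (by norm_num),
        hbr 2 7 (by norm_num) (by norm_num) (by norm_num) (by norm_num),
        hbr 3 6 (by norm_num) (by norm_num) (by norm_num) (by norm_num),
        smul_neg, smul_smul, smul_smul, smul_smul] at h
    norm_num [h9] at h
    rw [← sub_smul] at h
    rw [← neg_smul] at h
    have h' := key 8 _ _ h.symm
    linarith [h']
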